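/- Let $R_0>0$, $A_1>0$ and $4/3\le\gamma\le 2$. Then $M(R)=4\pi A_1\int_{R_0}^{R}(1/r-1/R)^{1/(\gamma-1)}r^2\,dr\to+\infty$ as $R\to\infty$. Consequently, for every $M_0>0$ there exists $R>R_0$ with $M(R)=M_0$. -/

import Mathlib

open Real

theorem stmt_3 (R0 A1 γ : ℝ) (M : ℝ → ℝ)
    (hR0 : 0 < R0) (hA1 : 0 < A1) (hγ1 : 4 / 3 ≤ γ) (hγ2 : γ ≤ 2)
    (hM : ∀ R : ℝ, M R = 4 * π * A1 * ∫ r in R0..R, (1 / r - 1 / R) ^ (1 / (γ - 1)) * r ^ 2) :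
    Filter.Tendsto M Filter.atTop Filter.atTop ∧
      ∀ M0 : ℝ, 0 < M0 → ∃ R : ℝ, R0 < R ∧ M R = M0 := by
  have hπ : (0:ℝ) < π := Real.pi_pos
  set α := 1 / (γ - 1) with hαdef
  have hγa : 1/3 ≤ γ - 1 := by linarith
  have hγb : γ - 1 ≤ 1 := by linarith
  have hγ0 : 0 < γ - 1 := by linarith
  have hα1 : 1 ≤ α := by
    rw [hαdef, le_div_iff₀ hγ0]; linarith
  have hα3 : α ≤ 3 := by
    rw [hαdef, div_le_iff₀ hγ0]; linarith
  have hα0 : 0 < α := by linarith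
  -- the regularized integrand
  set F : ℝ → ℝ → ℝ := fun R r => ((max r R0)⁻¹ - (max R R0)⁻¹) ^ α * r ^ 2 with hFdef
  have hFcont : Continuous (Function.uncurry F) := by
    have h1 : Continuous fun p : ℝ × ℝ => (max p.2 R0)⁻¹ - (max p.1 R0)⁻¹ := by
      apply Continuous.sub
      · exact (continuous_snd.max continuous_const).inv₀
          (fun p => by positivity)
      · exact (continuous_fst.max continuous_const).inv₀
          (fun p => by positivity)
    exact ((h1.rpow_const (fun p => Or.inr hα0.le)).mul (continuous_snd.pow 2))
  have hFRcont : ∀ R : ℝ, Continuous (F R) := fun R => hFcont.uncurry_left R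
  have hGcont : Continuous (fun R => ∫ r in R0..R, F R r) :=
    intervalIntegral.continuous_parametric_intervalIntegral_of_continuous hFcont continuous_id
  -- M agrees with the regularized integral for R ≥ R0
  have hMF : ∀ R : ℝ, R0 ≤ R → M R = 4 * π * A1 * ∫ r in R0..R, F R r := by
    intro R hR
    rw [hM R]
    congr 1
    apply intervalIntegral.integral_congr
    intro r hr
    rw [Set.uIcc_of_le hR] at hr
    have h1 : max r R0 = r := max_eq_left hr.1
    have h2 : max R R0 = R := max_eq_left hR
    simp only [hFdef, h1, h2, one_div]
  -- nonnegativity of F R r for R0 ≤ r ≤ R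
  have hFnonneg : ∀ R r : ℝ, r ≤ R → 0 ≤ F R r := by
    intro R r hr
    apply mul_nonneg _ (sq_nonneg r)
    apply Real.rpow_nonneg
    have : max r R0 ≤ max R R0 := max_le_max hr le_rfl
    have h0 : (0:ℝ) < max r R0 := lt_of_lt_of_le hR0 (le_max_right _ _)
    have := inv_anti₀ h0 this
    linarith
  set a : ℝ := max R0 1 with hadef
  have ha1 : (1:ℝ) ≤ a := le_max_right _ _
  have haR0 : R0 ≤ a := le_max_left _ _
  have ha0 : (0:ℝ) < a := lt_of_lt_of_le one_pos ha1
  -- key lower bound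
  have hlow : ∀ R : ℝ, 2 * a ≤ R →
      4 * π * A1 * (8⁻¹ * Real.log (R / 2 / a)) ≤ M R := by
    intro R hRa
    have hR2 : a ≤ R / 2 := by linarith
    have hRR : R / 2 ≤ R := by linarith
    have hR0R : R0 ≤ R := le_trans haR0 (by linarith)
    rw [hMF R hR0R]
    have hint : ∀ u v : ℝ, IntervalIntegrable (F R) MeasureTheory.volume u v :=
      fun u v => (hFRcont R).intervalIntegrable u v
    have hsplit : ∫ r in R0..R, F R r =
        (∫ r in R0..a, F R r) + ((∫ r in a..(R/2), F R r) + ∫ r in (R/2)..R, F R r) := by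
      rw [intervalIntegral.integral_add_adjacent_intervals (hint a (R/2)) (hint (R/2) R),
        intervalIntegral.integral_add_adjacent_intervals (hint R0 a) (hint a R)]
    have h1 : 0 ≤ ∫ r in R0..a, F R r := by
      apply intervalIntegral.integral_nonneg haR0
      intro r hr; exact hFnonneg R r (le_trans hr.2 (by linarith))
    have h3 : 0 ≤ ∫ r in (R/2)..R, F R r := by
      apply intervalIntegral.integral_nonneg hRR
      intro r hr; exact hFnonneg R r hr.2
    have h2 : 8⁻¹ * Real.log (R / 2 / a) ≤ ∫ r in a..(R/2), F R r := by
      have hinv : ∫ r in a..(R/2), (8 * r)⁻¹ = 8⁻¹ * Real.log (R / 2 / a) := by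
        have h0 : (0:ℝ) ∉ Set.uIcc a (R/2) := by
          rw [Set.uIcc_of_le hR2]
          intro h; exact absurd h.1 (by linarith)
        have : ∀ r ∈ Set.uIcc a (R/2), (8 * r)⁻¹ = 8⁻¹ * r⁻¹ := by
          intro r hr; rw [mul_inv]
        rw [intervalIntegral.integral_congr this, intervalIntegral.integral_const_mul,
          integral_inv h0]
      rw [← hinv]
      apply intervalIntegral.integral_mono_on hR2 _ (hint a (R/2))
      · intro r hr
        have hr1 : (1:ℝ) ≤ r := le_trans ha1 hr.1
        have hr0 : (0:ℝ) < r := by linarith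
        have hrR0 : R0 ≤ r := le_trans haR0 hr.1
        have hrR : r ≤ R := le_trans hr.2 hRR
        have h2r : 2 * r ≤ R := by linarith [hr.2]
        have hmr : max r R0 = r := max_eq_left hrR0
        have hmR : max R R0 = R := max_eq_left hR0R
        simp only [hFdef, hmr, hmR]
        set x := r⁻¹ - R⁻¹ with hxdef
        have hxlb : (2 * r)⁻¹ ≤ x := by
          have : R⁻¹ ≤ (2 * r)⁻¹ := inv_anti₀ (by linarith) h2r
          have : (2*r)⁻¹ = r⁻¹ - (2*r)⁻¹ := by field_simp; ring
          rw [this, hxdef]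
          have : R⁻¹ ≤ (2 * r)⁻¹ := inv_anti₀ (by linarith) h2r
          linarith
        have hx0 : 0 < x := lt_of_lt_of_le (by positivity) hxlb
        have hx1 : x ≤ 1 := by
          have h1 : r⁻¹ ≤ 1 := by simpa using inv_anti₀ one_pos hr1
          have h2 : 0 < R⁻¹ := inv_pos.2 (by linarith)
          rw [hxdef]; linarith
        have key : ((2 * r))⁻¹ ^ (3:ℝ) ≤ x ^ α := by
          calc ((2 * r))⁻¹ ^ (3:ℝ) ≤ x ^ (3:ℝ) :=
                Real.rpow_le_rpow (by positivity) hxlb (by norm_num)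
            _ ≤ x ^ α := Real.rpow_le_rpow_of_exponent_ge hx0 hx1 hα3
        have hcube : ((2 * r))⁻¹ ^ (3:ℝ) = (8 * r^3)⁻¹ := by
          rw [show (3:ℝ) = ((3:ℕ):ℝ) by norm_num, Real.rpow_natCast]
          rw [inv_pow, mul_pow]; norm_num
        rw [hcube] at key
        have : (8 * r^3)⁻¹ * r^2 ≤ x ^ α * r^2 := by
          apply mul_le_mul_of_nonneg_right key (sq_nonneg r)
        calc (8 * r)⁻¹ = (8 * r^3)⁻¹ * r^2 := by field_simp
          _ ≤ x ^ α * r^2 := this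
      · apply ContinuousOn.intervalIntegrable
        apply ContinuousOn.inv₀ (by fun_prop)
        intro r hr
        rw [Set.uIcc_of_le hR2] at hr
        have : (1:ℝ) ≤ r := le_trans ha1 hr.1
        positivity
    calc 4 * π * A1 * (8⁻¹ * Real.log (R / 2 / a))
        ≤ 4 * π * A1 * ∫ r in R0..R, F R r := by
          rw [hsplit]
          apply mul_le_mul_of_nonneg_left (by linarith) (by positivity)
      _ = 4 * π * A1 * ∫ r in R0..R, F R r := rfl
  -- Tendsto
  have htend : Filter.Tendsto M Filter.atTop Filter.atTop := by
    apply Filter.tendsto_atTop_mono' Filter.atTop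
      (Filter.eventually_atTop.2 ⟨2 * a, hlow⟩)
    apply Filter.Tendsto.const_mul_atTop (show (0:ℝ) < 4 * π * A1 by positivity)
    apply Filter.Tendsto.const_mul_atTop (show (0:ℝ) < 8⁻¹ by norm_num)
    apply Real.tendsto_log_atTop.comp
    apply Filter.Tendsto.atTop_div_const ha0
    exact Filter.Tendsto.atTop_div_const two_pos Filter.tendsto_id
  refine ⟨htend, fun M0 hM0 => ?_⟩
  obtain ⟨b, hb⟩ := (htend.eventually_ge_atTop M0).and
    (Filter.eventually_ge_atTop R0) |>.exists
  obtain ⟨hbM, hbR0⟩ := hb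
  have hcont : ContinuousOn M (Set.Icc R0 b) := by
    apply ContinuousOn.congr (((show Continuous (fun _ : ℝ => 4 * π * A1) from continuous_const).mul hGcont).continuousOn)
    intro R hR
    rw [hMF R hR.1]; rfl
  have hMR0 : M R0 = 0 := by
    rw [hMF R0 le_rfl, intervalIntegral.integral_same, mul_zero]
  have hIVT := intermediate_value_Icc hbR0 hcont
  have hmem : M0 ∈ Set.Icc (M R0) (M b) := by
    rw [hMR0]; exact ⟨hM0.le, hbM⟩
  obtain ⟨c, hc, hMc⟩ := hIVT hmem
  refine ⟨c, ?_, hMc⟩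
  rcases eq_or_lt_of_le hc.1 with h | h
  · exfalso; rw [← h, hMR0] at hMc; linarith
  · exact h
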